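/- In the hardness-of-approximation instance for BMaxP: V = {u_1,...,u_n} ∪ {v, v', v*} with weights ω(u_i)=a_i, ω(v)=M+1, ω(v')=R+M+2, ω(v*)=1 where R=Σa_i, quota q=R+2M+3, initial delegations d(u_i)=v and v, v', v* gurus. Then (a) v* is not a swing agent for any coalition in the initial election, so DB_{v*}=0; (b) after redirecting the delegations of a set U ⊆ {u_1,...,u_n} away from v (making them gurus), v* is a swing agent for the coalition U ∪ {v'} if and only if Σ_{u_i∈U} a_i = M. -/

import Mathlib

open Finset
open scoped Classical

/-- Total weight of voters in `C` whose entire delegation chain (the iterates of `d`)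
stays inside `C` (the "active" voters). -/
noncomputable def gamma {V : Type*} [Fintype V] (w : V → ℕ) (d : V → V) (C : Finset V) : ℕ :=
  ∑ i ∈ C, if ∀ k : ℕ, d^[k] i ∈ C then w i else 0

/-- A coalition wins iff its active weight meets the quota. -/
def wins {V : Type*} [Fintype V] (w : V → ℕ) (d : V → V) (q : ℕ) (C : Finset V) : Prop :=
  q ≤ gamma w d C

/-- Voter `i` is a swing agent for coalition `C`. -/
noncomputable def swing {V : Type*} [Fintype V] (w : V → ℕ) (d : V → V) (q : ℕ)
    (i : V) (C : Finset V) : Prop :=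
  ¬ wins w d q C ∧ wins w d q (insert i C)

/-- Number of coalitions `C ⊆ V \ {i}` for which `i` is a swing agent. -/
noncomputable def swingCount {V : Type*} [Fintype V] (w : V → ℕ) (d : V → V) (q : ℕ)
    (i : V) : ℕ :=
  (((univ : Finset V).erase i).powerset.filter (fun C => swing w d q i C)).card

/-- Delegative Banzhaf measure. -/
noncomputable def DB {V : Type*} [Fintype V] (w : V → ℕ) (d : V → V) (q : ℕ) (i : V) : ℚ :=
  (swingCount w d q i : ℚ) / 2 ^ (Fintype.card V - 1)

/-- Delegative Shapley-Shubik index. -/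
noncomputable def DS {V : Type*} [Fintype V] (w : V → ℕ) (d : V → V) (q : ℕ) (i : V) : ℚ :=
  ∑ C ∈ ((univ : Finset V).erase i).powerset,
    if swing w d q i C then
      (Nat.factorial C.card * Nat.factorial (Fintype.card V - C.card - 1) : ℚ) /
        Nat.factorial (Fintype.card V)
    else 0

/-- Hardness-of-approximation instance for BMaxP.
Voters: u_1,...,u_n (= Sum.inl i, weights a_i), v (= inr 0, weight M+1),
v' (= inr 1, weight R+M+2) and v* (= inr 2, weight 1), with R = Σ a_i and quota
q = R + 2M + 3.
(a) In the initial election (each u_i delegates to v; v, v', v* are gurus),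
v* is not swing for any coalition, so DB_{v*} = 0.
(b) After redirecting the delegations of U ⊆ {u_1,...,u_n} away from v (making
them gurus), v* is a swing agent for the coalition U ∪ {v'} iff Σ_{i∈U} a_i = M. -/

lemma gamma_idem {V : Type*} [Fintype V] (w : V → ℕ) (d : V → V)
    (hd : ∀ x, d (d x) = d x) (C : Finset V) :
    gamma w d C = ∑ i ∈ C, if d i ∈ C then w i else 0 := by
  unfold gamma
  refine Finset.sum_congr rfl fun i hi => ?_
  have hiter : ∀ k : ℕ, d^[k+1] i = d i := by
    intro k
    induction k with
    | zero => simp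
    | succ k ih => rw [Function.iterate_succ_apply', ih, hd]
  congr 1
  simp only [eq_iff_iff]
  constructor
  · intro h; simpa using h 1
  · intro h k
    cases k with
    | zero => simpa using hi
    | succ k => rw [hiter]; exact h

lemma gamma_insert_fixed {V : Type*} [Fintype V] (w : V → ℕ) (d : V → V)
    (hd : ∀ x, d (d x) = d x) (v : V) (hv : d v = v)
    (hpre : ∀ x, d x = v → x = v) (C : Finset V) (hvC : v ∉ C) :
    gamma w d (insert v C) = gamma w d C + w v := by
  rw [gamma_idem w d hd, gamma_idem w d hd, Finset.sum_insert hvC]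
  have h1 : (if d v ∈ insert v C then w v else 0) = w v := by
    rw [hv]; simp
  rw [h1, add_comm]
  congr 1
  refine Finset.sum_congr rfl fun i hi => ?_
  have hiff : d i ∈ insert v C ↔ d i ∈ C := by
    simp only [Finset.mem_insert]
    constructor
    · rintro (h | h)
      · have := hpre i h; subst this; exact absurd hi hvC
      · exact h
    · exact Or.inr
  simp only [hiff]

lemma mem_powerset_erase_not_mem {V : Type*} [Fintype V] {i : V} {C : Finset V}
    (h : C ∈ ((univ : Finset V).erase i).powerset) : i ∉ C := by
  rw [Finset.mem_powerset] at h
  intro hi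
  exact (Finset.mem_erase.mp (h hi)).1 rfl

lemma le_gamma_pair {V : Type*} [Fintype V] (w : V → ℕ) (d : V → V)
    (hd : ∀ x, d (d x) = d x) (C : Finset V) {x y : V} (hxy : x ≠ y)
    (hx : x ∈ C) (hy : y ∈ C) (hdx : d x = x) (hdy : d y = y) :
    w x + w y ≤ gamma w d C := by
  rw [gamma_idem w d hd]
  have hsub : ({x, y} : Finset V) ⊆ C := by
    intro z hz
    rcases Finset.mem_insert.mp hz with h | h
    · exact h ▸ hx
    · exact (Finset.mem_singleton.mp h) ▸ hy
  refine le_trans (le_of_eq ?_) (Finset.sum_le_sum_of_subset hsub)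
  rw [Finset.sum_pair hxy, hdx, hdy, if_pos hx, if_pos hy]

lemma gamma_le_sum {V : Type*} [Fintype V] (w : V → ℕ) (d : V → V)
    (hd : ∀ x, d (d x) = d x) (C : Finset V) (g : V → ℕ)
    (hg : ∀ i ∈ C, (if d i ∈ C then w i else 0) ≤ g i) :
    gamma w d C ≤ ∑ i ∈ C, g i := by
  rw [gamma_idem w d hd]
  exact Finset.sum_le_sum hg

theorem stmt18 (n : ℕ) (a : Fin n → ℕ) (M : ℕ) (hM : 1 ≤ M) :
    DB (Sum.elim a (![M + 1, (∑ i, a i) + M + 2, 1] : Fin 3 → ℕ))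
        (Sum.elim (fun _ => (Sum.inr 0 : Fin n ⊕ Fin 3)) (fun j => Sum.inr j))
        ((∑ i, a i) + 2 * M + 3) (Sum.inr 2) = 0 ∧
    ∀ U : Finset (Fin n),
      (swing (Sum.elim a (![M + 1, (∑ i, a i) + M + 2, 1] : Fin 3 → ℕ))
          (Sum.elim
            (fun i => if i ∈ U then (Sum.inl i : Fin n ⊕ Fin 3) else Sum.inr 0)
            (fun j => Sum.inr j))
          ((∑ i, a i) + 2 * M + 3) (Sum.inr 2)
          (U.image Sum.inl ∪ {Sum.inr 1}) ↔
        ∑ i ∈ U, a i = M) := by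
  classical
  set w : Fin n ⊕ Fin 3 → ℕ := Sum.elim a ![M + 1, (∑ i, a i) + M + 2, 1] with hw
  constructor
  · -- part (a)
    set d0 : Fin n ⊕ Fin 3 → Fin n ⊕ Fin 3 :=
      Sum.elim (fun _ => Sum.inr 0) (fun j => Sum.inr j) with hd0def
    have hd0 : ∀ x, d0 (d0 x) = d0 x := by rintro (i | j) <;> rfl
    have hpre : ∀ x, d0 x = Sum.inr 2 → x = Sum.inr 2 := by
      rintro (i | j) h
      · exact absurd h (by simp [hd0def])
      · simpa [hd0def] using h
    have hcount : swingCount w d0 ((∑ i, a i) + 2 * M + 3) (Sum.inr 2) = 0 := by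
      rw [swingCount, Finset.card_eq_zero, Finset.filter_eq_empty_iff]
      intro C hC
      have h2C : (Sum.inr 2 : Fin n ⊕ Fin 3) ∉ C := mem_powerset_erase_not_mem hC
      rintro ⟨hnw, hwin⟩
      unfold wins at hnw hwin
      rw [gamma_insert_fixed w d0 hd0 _ rfl hpre C h2C,
        show w (Sum.inr 2) = 1 from rfl] at hwin
      by_cases h0 : (Sum.inr 0 : Fin n ⊕ Fin 3) ∈ C
      · by_cases h1 : (Sum.inr 1 : Fin n ⊕ Fin 3) ∈ C
        · -- both v, v' in C : C wins already, contradiction with hnw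
          have hne : (Sum.inr 0 : Fin n ⊕ Fin 3) ≠ Sum.inr 1 := by simp
          have hpair := le_gamma_pair w d0 hd0 C hne h0 h1 rfl rfl
          rw [show w (Sum.inr 0) = M + 1 from rfl,
            show w (Sum.inr 1) = (∑ i, a i) + M + 2 from rfl] at hpair
          omega
        · -- v ∈ C, v' ∉ C : active weight ≤ R + M + 1
          have hle : gamma w d0 C ≤
              ∑ i ∈ C, Sum.elim a (fun j : Fin 3 => if j = 0 then M + 1 else 0) i := by
            refine gamma_le_sum w d0 hd0 C _ fun i hi => ?_
            rcases i with i | j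
            · split_ifs with hh
              · exact le_of_eq rfl
              · exact Nat.zero_le _
            · rw [show d0 (Sum.inr j) = Sum.inr j from rfl]
              by_cases hj0 : j = 0
              · subst hj0
                rw [if_pos hi]
                exact le_of_eq rfl
              · exfalso
                have hj1 : j ≠ 1 := fun h => h1 (h ▸ hi)
                have hj2 : j ≠ 2 := fun h => h2C (h ▸ hi)
                fin_cases j
                exacts [hj0 rfl, hj1 rfl, hj2 rfl]
          have h2 : ∑ i ∈ C, Sum.elim a (fun j : Fin 3 => if j = 0 then M + 1 else 0) i ≤
              ∑ i, Sum.elim a (fun j : Fin 3 => if j = 0 then M + 1 else 0) i :=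
            Finset.sum_le_sum_of_subset (Finset.subset_univ C)
          have h3 : ∑ i, Sum.elim a (fun j : Fin 3 => if j = 0 then M + 1 else 0) i =
              (∑ i, a i) + (M + 1) := by
            rw [Fintype.sum_sum_type]
            simp [Fin.sum_univ_three]
          omega
      · -- v ∉ C : only v' can be active
        have hle : gamma w d0 C ≤
            ∑ i ∈ C, (if i = Sum.inr 1 then (∑ i, a i) + M + 2 else 0) := by
          refine gamma_le_sum w d0 hd0 C _ fun i hi => ?_
          rcases i with i | j
          · rw [show d0 (Sum.inl i) = Sum.inr 0 from rfl, if_neg h0]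
            exact Nat.zero_le _
          · rw [show d0 (Sum.inr j) = Sum.inr j from rfl, if_pos hi]
            by_cases hj1 : j = 1
            · subst hj1
              rw [if_pos rfl]
              exact le_of_eq rfl
            · exfalso
              have hj0 : j ≠ 0 := fun h => h0 (h ▸ hi)
              have hj2 : j ≠ 2 := fun h => h2C (h ▸ hi)
              fin_cases j
              exacts [hj0 rfl, hj1 rfl, hj2 rfl]
        rw [Finset.sum_ite_eq' C (Sum.inr 1) (fun _ => (∑ i, a i) + M + 2)] at hle
        split_ifs at hle <;> omega
    rw [DB, hcount]
    simp
  · -- part (b)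
    intro U
    set d : Fin n ⊕ Fin 3 → Fin n ⊕ Fin 3 :=
      Sum.elim (fun i => if i ∈ U then Sum.inl i else Sum.inr 0) (fun j => Sum.inr j)
      with hddef
    have hd : ∀ x, d (d x) = d x := by
      rintro (i | j)
      · simp only [hddef, Sum.elim_inl]
        split_ifs with h
        · simp [h]
        · rfl
      · rfl
    have hpre : ∀ x, d x = Sum.inr 2 → x = Sum.inr 2 := by
      rintro (i | j) h
      · simp only [hddef, Sum.elim_inl] at h
        split_ifs at h <;> simp_all
      · simpa [hddef] using h
    set C : Finset (Fin n ⊕ Fin 3) := U.image Sum.inl ∪ {Sum.inr 1} with hCdef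
    have h2C : (Sum.inr 2 : Fin n ⊕ Fin 3) ∉ C := by
      simp [hCdef]
    have hmem : ∀ x : Fin n ⊕ Fin 3, x ∈ C ↔
        (∃ i ∈ U, x = Sum.inl i) ∨ x = Sum.inr 1 := by
      intro x
      simp [hCdef, eq_comm]
      exact or_comm
    have hgamma : gamma w d C = (∑ i ∈ U, a i) + ((∑ i, a i) + M + 2) := by
      rw [gamma_idem w d hd]
      have hdisj : Disjoint (U.image Sum.inl) ({Sum.inr 1} : Finset (Fin n ⊕ Fin 3)) := by
        simp [Finset.disjoint_singleton_right]
      rw [hCdef, Finset.sum_union hdisj,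
        Finset.sum_image (fun i _ j _ h => Sum.inl.inj h)]
      congr 1
      · refine Finset.sum_congr rfl fun i hi => ?_
        have hdi : d (Sum.inl i) = Sum.inl i := by
          simp [hddef, hi]
        rw [hdi, if_pos ((hmem _).mpr (Or.inl ⟨i, hi, rfl⟩))]
        rfl
      · rw [Finset.sum_singleton,
          show d (Sum.inr 1) = Sum.inr 1 from rfl,
          if_pos ((hmem _).mpr (Or.inr rfl))]
        rfl
    unfold swing wins
    rw [gamma_insert_fixed w d hd _ rfl hpre C h2C, hgamma,
      show w (Sum.inr 2) = 1 from rfl]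
    omega
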